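/- Let F = F₁ ∪ F₂ be a set of FDs over schema R such that all attributes in Att(F₁) ∩ Att(F₂) are certain. Let U be a CIR over R and let the random samples r₁ = π_{Att(F₁)}r and r₂ = π_{Att(F₂)}r be the projections of a random sample r of U. Then the events {r₁ ⊨ F₁} and {r₂ ⊨ F₂} are probabilistically independent, and Pr_U(F) = Pr_{U₁}(F₁) · Pr_{U₂}(F₂), where U_j = π_{Att(F_j)}U. -/
import Mathlib

open Classical

set_option maxHeartbeats 1000000

private lemma sum_q_one {Att V ι : Type} [Fintype Att] [Fintype V] [Fintype ι]
    (p : ι → Att → V → ℝ) (hsum : ∀ i a, ∑ v : V, p i a v = 1) :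
    ∑ s : ι → Att → V, ∏ i : ι, ∏ a : Att, p i a (s i a) = 1 := by
  classical
  rw [← Fintype.prod_sum (fun i (h : Att → V) => ∏ a : Att, p i a (h a))]
  apply Finset.prod_eq_one
  intro i _
  rw [← Fintype.prod_sum (fun a (v : V) => p i a v)]
  exact Finset.prod_eq_one fun a _ => hsum i a

private lemma indep_aux {Att V ι : Type} [Fintype Att] [Fintype V] [Fintype ι]
    (p : ι → Att → V → ℝ) (hsum : ∀ i a, ∑ v : V, p i a v = 1)
    (A : Finset Att) (P1 P2 : (ι → Att → V) → Prop)
    (h1 : ∀ s t : ι → Att → V, (∀ i, ∀ a ∈ A, s i a = t i a) → (P1 s ↔ P1 t))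
    (h2 : ∀ s t : ι → Att → V, (∀ i, ∀ a, a ∉ A → s i a = t i a) → (P2 s ↔ P2 t)) :
    (∑ s : ι → Att → V, if P1 s then (if P2 s then ∏ i : ι, ∏ a : Att, p i a (s i a) else 0) else 0)
      = (∑ s : ι → Att → V, if P1 s then ∏ i : ι, ∏ a : Att, p i a (s i a) else 0)
        * (∑ s : ι → Att → V, if P2 s then ∏ i : ι, ∏ a : Att, p i a (s i a) else 0) := by
  classical
  set q : (ι → Att → V) → ℝ := fun s => ∏ i : ι, ∏ a : Att, p i a (s i a) with hq
  have hnest : ∀ s : ι → Att → V,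
      (if P1 s then (if P2 s then q s else 0) else 0) = if P1 s ∧ P2 s then q s else 0 := by
    intro s; by_cases c1 : P1 s <;> by_cases c2 : P2 s <;> simp [c1, c2]
  rw [Finset.sum_congr rfl (fun s _ => hnest s)]
  set m : (ι → Att → V) → (ι → Att → V) → (ι → Att → V) :=
    fun s t i a => if a ∈ A then s i a else t i a with hm
  have hmm1 : ∀ s t : ι → Att → V, m (m s t) (m t s) = s := by
    intro s t; funext i a; by_cases h : a ∈ A <;> simp [hm, h]
  set e : ((ι → Att → V) × (ι → Att → V)) → ((ι → Att → V) × (ι → Att → V)) :=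
    fun st => (m st.1 st.2, m st.2 st.1) with he
  have hinv : Function.Involutive e := by
    intro st; simp only [he, hmm1]
  have hkey : ∀ s t, q (m s t) * q (m t s) = q s * q t := by
    intro s t
    have step : ∀ u w : ι → Att → V,
        q u * q w = ∏ i : ι, ∏ a : Att, p i a (u i a) * p i a (w i a) := by
      intro u w
      rw [hq, ← Finset.prod_mul_distrib]
      exact Finset.prod_congr rfl fun i _ => (Finset.prod_mul_distrib).symm
    rw [step, step]
    apply Finset.prod_congr rfl; intro i _
    apply Finset.prod_congr rfl; intro a _
    by_cases h : a ∈ A <;> simp [hm, h, mul_comm]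
  have hP1 : ∀ s t, P1 (m s t) ↔ P1 s := by
    intro s t; exact h1 _ _ (fun i a ha => by simp [hm, ha])
  have hP2 : ∀ s t, P2 (m t s) ↔ P2 s := by
    intro s t; exact h2 _ _ (fun i a ha => by simp [hm, ha])
  rw [Finset.sum_mul_sum]
  rw [← Fintype.sum_prod_type (f := fun st : ((ι → Att → V) × (ι → Att → V)) =>
    (if P1 st.1 then q st.1 else 0) * (if P2 st.2 then q st.2 else 0))]
  rw [← Equiv.sum_comp (hinv.toPerm e) (fun st : ((ι → Att → V) × (ι → Att → V)) =>
    (if P1 st.1 then q st.1 else 0) * (if P2 st.2 then q st.2 else 0))]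
  have : ∀ st : ((ι → Att → V) × (ι → Att → V)),
      (if P1 ((hinv.toPerm e) st).1 then q ((hinv.toPerm e) st).1 else 0)
        * (if P2 ((hinv.toPerm e) st).2 then q ((hinv.toPerm e) st).2 else 0)
      = (if P1 st.1 ∧ P2 st.1 then q st.1 else 0) * q st.2 := by
    intro ⟨s, t⟩
    have h1' : ((hinv.toPerm e) (s, t)).1 = m s t := rfl
    have h2' : ((hinv.toPerm e) (s, t)).2 = m t s := rfl
    rw [h1', h2']
    by_cases c1 : P1 s <;> by_cases c2 : P2 s <;>
      simp [hP1 s t, hP2 s t, c1, c2, hkey s t]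
  rw [Finset.sum_congr rfl (fun st _ => this st)]
  rw [Fintype.sum_prod_type]
  have : ∀ s : ι → Att → V,
      (∑ t : ι → Att → V, (if P1 s ∧ P2 s then q s else 0) * q t)
        = (if P1 s ∧ P2 s then q s else 0) := by
    intro s
    rw [← Finset.mul_sum, sum_q_one p hsum, mul_one]
  rw [Finset.sum_congr rfl (fun s _ => this s)]

private lemma sat_dep {Att V ι : Type} (F : Finset (Finset Att × Finset Att))
    (s t : ι → Att → V)
    (h : ∀ i, ∀ a ∈ F.sup fun fd => fd.1 ∪ fd.2, s i a = t i a)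
    (hs : ∀ fd ∈ F, ∀ i j : ι,
      (∀ a ∈ fd.1, s i a = s j a) → ∀ a ∈ fd.2, s i a = s j a) :
    ∀ fd ∈ F, ∀ i j : ι,
      (∀ a ∈ fd.1, t i a = t j a) → ∀ a ∈ fd.2, t i a = t j a := by
  classical
  intro fd hfd i j hag a ha2
  have hmem : ∀ a, a ∈ fd.1 ∪ fd.2 → a ∈ F.sup fun fd => fd.1 ∪ fd.2 :=
    fun a ha => Finset.mem_sup.mpr ⟨fd, hfd, ha⟩
  have key : ∀ a ∈ fd.2, s i a = s j a := by
    apply hs fd hfd i j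
    intro b hb1
    have hb : b ∈ F.sup fun fd => fd.1 ∪ fd.2 := hmem b (Finset.mem_union_left _ hb1)
    exact (h i b hb).trans ((hag b hb1).trans (h j b hb).symm)
  have ha : a ∈ F.sup fun fd => fd.1 ∪ fd.2 := hmem a (Finset.mem_union_right _ ha2)
  exact (h i a ha).symm.trans ((key a ha2).trans (h j a ha))

/-- Let `F = F₁ ∪ F₂` over schema `R` with all attributes in
`Att(F₁) ∩ Att(F₂)` certain (deterministic point-mass cells).  Then the events
`{r₁ ⊨ F₁}` and `{r₂ ⊨ F₂}` over a random sample `r` of `U` are independent and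
`Pr_U(F) = Pr_{U₁}(F₁) · Pr_{U₂}(F₂)`: the probability that a random sample satisfies
`F₁ ∪ F₂` equals the product of the probabilities of satisfying `F₁` and of satisfying `F₂`
(each depending only on the corresponding projection of the sample). -/
theorem stmt5 {Att V ι : Type} [Fintype Att] [Fintype V] [Fintype ι]
    (F1 F2 : Finset (Finset Att × Finset Att))
    (p : ι → Att → V → ℝ)
    (hnn : ∀ (i : ι) (a : Att) (v : V), 0 ≤ p i a v)
    (hsum : ∀ (i : ι) (a : Att), ∑ v : V, p i a v = 1)
    (hdet : ∀ a ∈ (F1.sup fun fd => fd.1 ∪ fd.2) ∩ (F2.sup fun fd => fd.1 ∪ fd.2),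
      ∀ i : ι, ∃ v : V, ∀ w : V, p i a w = if w = v then 1 else 0) :
    (∑ s ∈ Finset.univ.filter (fun s : ι → Att → V =>
        ∀ fd ∈ F1 ∪ F2, ∀ i j : ι,
          (∀ a ∈ fd.1, s i a = s j a) → ∀ a ∈ fd.2, s i a = s j a),
        ∏ i : ι, ∏ a : Att, p i a (s i a))
      = (∑ s ∈ Finset.univ.filter (fun s : ι → Att → V =>
            ∀ fd ∈ F1, ∀ i j : ι,
              (∀ a ∈ fd.1, s i a = s j a) → ∀ a ∈ fd.2, s i a = s j a),
            ∏ i : ι, ∏ a : Att, p i a (s i a))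
        * (∑ s ∈ Finset.univ.filter (fun s : ι → Att → V =>
            ∀ fd ∈ F2, ∀ i j : ι,
              (∀ a ∈ fd.1, s i a = s j a) → ∀ a ∈ fd.2, s i a = s j a),
            ∏ i : ι, ∏ a : Att, p i a (s i a)) := by
  classical
  set A1 : Finset Att := F1.sup fun fd => fd.1 ∪ fd.2 with hA1
  set A2 : Finset Att := F2.sup fun fd => fd.1 ∪ fd.2 with hA2
  set q : (ι → Att → V) → ℝ := fun s => ∏ i : ι, ∏ a : Att, p i a (s i a) with hqdef
  obtain ⟨P1, hP1def⟩ : ∃ P1 : (ι → Att → V) → Prop, P1 = fun s => ∀ fd ∈ F1, ∀ i j : ι,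
      (∀ a ∈ fd.1, s i a = s j a) → ∀ a ∈ fd.2, s i a = s j a := ⟨_, rfl⟩
  obtain ⟨P2, hP2def⟩ : ∃ P2 : (ι → Att → V) → Prop, P2 = fun s => ∀ fd ∈ F2, ∀ i j : ι,
      (∀ a ∈ fd.1, s i a = s j a) → ∀ a ∈ fd.2, s i a = s j a := ⟨_, rfl⟩
  rw [Finset.sum_filter, Finset.sum_filter, Finset.sum_filter]
  have hu : ∀ s : ι → Att → V, (∀ fd ∈ F1 ∪ F2, ∀ i j : ι,
      (∀ a ∈ fd.1, s i a = s j a) → ∀ a ∈ fd.2, s i a = s j a) ↔ (P1 s ∧ P2 s) := by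
    intro s
    simp only [Finset.mem_union, or_imp, forall_and, hP1def, hP2def]
  -- deterministic cells / adjust
  set D : ι → Att → Prop := fun i a => ∃ v : V, ∀ w : V, p i a w = if w = v then 1 else 0
    with hDdef
  set adj : (ι → Att → V) → (ι → Att → V) :=
    fun s i a => if h : D i a then h.choose else s i a with hadjdef
  obtain ⟨P2', hP2'def⟩ : ∃ P2' : (ι → Att → V) → Prop, P2' = fun s => P2 (adj s) := ⟨_, rfl⟩
  have hadj_fix : ∀ s : ι → Att → V, q s ≠ 0 → adj s = s := by
    intro s hqs
    funext i a
    by_cases hD : D i a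
    · have hp1 : (∏ a : Att, p i a (s i a)) ≠ 0 :=
        Finset.prod_ne_zero_iff.mp hqs i (Finset.mem_univ i)
      have hp2 : p i a (s i a) ≠ 0 :=
        Finset.prod_ne_zero_iff.mp hp1 a (Finset.mem_univ a)
      have hspec := hD.choose_spec (s i a)
      have hsa : s i a = hD.choose := by
        by_contra hne
        rw [if_neg hne] at hspec
        exact hp2 hspec
      simp only [hadjdef]
      rw [dif_pos hD]
      exact hsa.symm
    · simp only [hadjdef]
      rw [dif_neg hD]
  -- dependence lemmas
  have hdep1 : ∀ s t : ι → Att → V, (∀ i, ∀ a ∈ A1, s i a = t i a) → (P1 s ↔ P1 t) := by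
    intro s t h
    simp only [hP1def]
    exact ⟨sat_dep F1 s t h, sat_dep F1 t s (fun i a ha => (h i a ha).symm)⟩
  have hdep2 : ∀ s t : ι → Att → V, (∀ i, ∀ a ∈ A2, s i a = t i a) → (P2 s ↔ P2 t) := by
    intro s t h
    simp only [hP2def]
    exact ⟨sat_dep F2 s t h, sat_dep F2 t s (fun i a ha => (h i a ha).symm)⟩
  have hdep2' : ∀ s t : ι → Att → V, (∀ i, ∀ a, a ∉ A1 → s i a = t i a) → (P2' s ↔ P2' t) := by
    intro s t h
    simp only [hP2'def]
    apply hdep2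
    intro i a ha2
    by_cases hA : a ∈ A1
    · have hD : D i a := hdet a (Finset.mem_inter.mpr ⟨hA, ha2⟩) i
      simp only [hadjdef]
      rw [dif_pos hD, dif_pos hD]
    · by_cases hD : D i a
      · simp only [hadjdef]; rw [dif_pos hD, dif_pos hD]
      · simp only [hadjdef]; rw [dif_neg hD, dif_neg hD]; exact h i a hA
  -- replace P2 by P2' inside the sums
  have e1 : (∑ s : ι → Att → V, if P1 s ∧ P2 s then q s else 0)
      = ∑ s : ι → Att → V, if P1 s ∧ P2' s then q s else 0 := by
    apply Finset.sum_congr rfl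
    intro s _
    by_cases hq0 : q s = 0
    · split_ifs <;> simp [hq0]
    · have := hadj_fix s hq0
      simp only [hP2'def, this]
  have e2 : (∑ s : ι → Att → V, if P2 s then q s else 0)
      = ∑ s : ι → Att → V, if P2' s then q s else 0 := by
    apply Finset.sum_congr rfl
    intro s _
    by_cases hq0 : q s = 0
    · split_ifs <;> simp [hq0]
    · have := hadj_fix s hq0
      simp only [hP2'def, this]
  have main : (∑ s : ι → Att → V, if P1 s ∧ P2 s then q s else 0)
      = (∑ s : ι → Att → V, if P1 s then q s else 0)
        * (∑ s : ι → Att → V, if P2 s then q s else 0) :=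
    calc (∑ s : ι → Att → V, if P1 s ∧ P2 s then q s else 0)
        = ∑ s : ι → Att → V, if P1 s ∧ P2' s then q s else 0 := e1
      _ = ∑ s : ι → Att → V, if P1 s then (if P2' s then q s else 0) else 0 := by
          apply Finset.sum_congr rfl; intro s _
          by_cases c1 : P1 s
          · by_cases c2 : P2' s
            · rw [if_pos (show P1 s ∧ P2' s from ⟨c1, c2⟩), if_pos c1, if_pos c2]
            · rw [if_neg (show ¬(P1 s ∧ P2' s) from fun h => c2 h.2), if_pos c1, if_neg c2]
          · rw [if_neg (show ¬(P1 s ∧ P2' s) from fun h => c1 h.1), if_neg c1]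
      _ = (∑ s : ι → Att → V, if P1 s then q s else 0)
          * (∑ s : ι → Att → V, if P2' s then q s else 0) :=
          indep_aux p hsum A1 P1 P2' hdep1 hdep2'
      _ = (∑ s : ι → Att → V, if P1 s then q s else 0)
          * (∑ s : ι → Att → V, if P2 s then q s else 0) := by rw [e2]
  have hiff1 : ∀ s : ι → Att → V, P1 s ↔ (∀ fd ∈ F1, ∀ i j : ι,
      (∀ a ∈ fd.1, s i a = s j a) → ∀ a ∈ fd.2, s i a = s j a) := by
    intro s; simp only [hP1def]
  have hiff2 : ∀ s : ι → Att → V, P2 s ↔ (∀ fd ∈ F2, ∀ i j : ι,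
      (∀ a ∈ fd.1, s i a = s j a) → ∀ a ∈ fd.2, s i a = s j a) := by
    intro s; simp only [hP2def]
  refine (Finset.sum_congr rfl fun s _ => if_congr (hu s) rfl rfl).trans
    (main.trans (congrArg₂ (· * ·)
      (Finset.sum_congr rfl fun s _ => if_congr (hiff1 s) rfl rfl)
      (Finset.sum_congr rfl fun s _ => if_congr (hiff2 s) rfl rfl)))
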